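/- Let G be a finite simple graph on n ≥ 3 vertices such that every pair of nonadjacent vertices x, y satisfies deg(x) + deg(y) ≥ n. Then G is Hamiltonian. -/

import Mathlib

open SimpleGraph

/-- A set of vertices is independent if no two of its vertices are adjacent. -/
def SimpleGraph.IsIndepSet' {V : Type*} (G : SimpleGraph V) (s : Set V) : Prop :=
  s.Pairwise fun u v => ¬ G.Adj u v

/-- The independence number `α(G)`: the maximum size of an independent set. -/
noncomputable def SimpleGraph.indepNum' {V : Type*} (G : SimpleGraph V) [Fintype V] : ℕ :=
  sSup {n | ∃ s : Finset V, G.IsIndepSet' ↑s ∧ s.card = n}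

/-- `G` is `k`-connected: `G` has more than `k` vertices and deleting any set of
fewer than `k` vertices leaves a connected graph. -/
def SimpleGraph.IsKConnected {V : Type*} (G : SimpleGraph V) [Fintype V] (k : ℕ) : Prop :=
  k < Fintype.card V ∧ ∀ s : Set V, s.ncard < k → (G.induce sᶜ).Connected

/-- The connectivity `κ(G)`: the largest `k` such that `G` is `k`-connected. -/
noncomputable def SimpleGraph.connectivity' {V : Type*} (G : SimpleGraph V) [Fintype V] : ℕ :=
  sSup {k | G.IsKConnected k}

/-- `σ_k(G)`: the minimum degree sum over independent sets of size `k`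
(`⊤` if there is no such set). -/
noncomputable def SimpleGraph.sigmaDeg {V : Type*} (G : SimpleGraph V) [Fintype V]
    (k : ℕ) : ℕ∞ := by
  classical
  exact ⨅ s ∈ {s : Finset V | G.IsIndepSet' ↑s ∧ s.card = k}, (∑ x ∈ s, G.degree x : ℕ∞)

section OreAux
open SimpleGraph Walk Finset

variable {V : Type*} {G : SimpleGraph V}

lemma oreDecomp {u v : V} {p : G.Walk u v} {d : G.Dart} (hd : d ∈ p.darts) :
    ∃ (q1 : G.Walk u d.fst) (q2 : G.Walk d.snd v), p = q1.append (Walk.cons d.adj q2) := by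
  induction p with
  | nil => simp at hd
  | cons h q ih =>
    rw [Walk.darts_cons, List.mem_cons] at hd
    rcases hd with rfl | hd
    · exact ⟨Walk.nil, q, rfl⟩
    · obtain ⟨q1, q2, rfl⟩ := ih hd
      exact ⟨Walk.cons h q1, q2, rfl⟩

lemma oreLoopNil {a : V} {p : G.Walk a a} (hp : p.IsPath) : p = Walk.nil := by
  cases p with
  | nil => rfl
  | cons h q =>
    have := hp.support_nodup
    rw [Walk.support_cons, List.nodup_cons] at this
    exact absurd q.end_mem_support this.1

lemma oreEdgeNotMem {a b : V} {p : G.Walk a b} (hp : p.IsPath) (hlen : 2 ≤ p.length) :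
    s(b, a) ∉ p.edges := by
  intro he
  simp only [Walk.edges, List.mem_map] at he
  obtain ⟨d, hd, hde⟩ := he
  rw [SimpleGraph.dart_edge_eq_mk'_iff'] at hde
  have hsnd_ne_a : d.snd ≠ a := by
    intro h
    have : a ∈ p.darts.map (·.snd) := List.mem_map.2 ⟨d, hd, h⟩
    rw [Walk.map_snd_darts] at this
    have h2 := hp.support_nodup
    rw [p.support_eq_cons, List.nodup_cons] at h2
    exact h2.1 this
  rcases hde with ⟨hf, hs⟩ | ⟨hf, hs⟩
  · exact hsnd_ne_a hs
  · -- d.fst = a, d.snd = b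
    obtain ⟨q1, q2, hpe⟩ := oreDecomp hd
    have hq1 : (q1.copy rfl hf).IsPath := by
      rw [Walk.isPath_copy]
      rw [hpe] at hp
      exact hp.of_append_left
    have hq2 : (q2.copy hs rfl).IsPath := by
      rw [Walk.isPath_copy]
      rw [hpe] at hp
      exact (hp.of_append_right).of_cons
    have h1 := oreLoopNil hq1
    have h2 := oreLoopNil hq2
    have l1 : q1.length = 0 := by
      have := congrArg Walk.length h1
      simpa using this
    have l2 : q2.length = 0 := by
      have := congrArg Walk.length h2
      simpa using this
    rw [hpe] at hlen
    rw [Walk.length_append, Walk.length_cons, l1, l2] at hlen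
    omega

section cnt
variable [Fintype V] [DecidableEq V] [DecidableRel G.Adj]

lemma oreInjSnd {a b : V} {p : G.Walk a b} (hp : p.IsPath) :
    ∀ d1 ∈ p.darts, ∀ d2 ∈ p.darts, d1.snd = d2.snd → d1 = d2 := by
  apply List.inj_on_of_nodup_map
  rw [Walk.map_snd_darts]
  have h2 := hp.support_nodup
  rw [p.support_eq_cons, List.nodup_cons] at h2
  exact h2.2

lemma oreInjFst {a b : V} {p : G.Walk a b} (hp : p.IsPath) :
    ∀ d1 ∈ p.darts, ∀ d2 ∈ p.darts, d1.fst = d2.fst → d1 = d2 := by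
  apply List.inj_on_of_nodup_map
  rw [Walk.map_fst_darts]
  exact hp.support_nodup.sublist (List.dropLast_sublist _)

lemma oreCountSnd {a b : V} {p : G.Walk a b}
    (hp : p.IsPath) (hNa : ∀ w, G.Adj a w → w ∈ p.support) :
    ((p.darts.toFinset).filter (fun d => G.Adj a d.snd)).card = G.degree a := by
  rw [SimpleGraph.degree]
  apply Finset.card_bij (fun d _ => d.snd)
  · intro d hd
    rw [Finset.mem_filter] at hd
    rw [SimpleGraph.mem_neighborFinset]
    exact hd.2
  · intro d1 h1 d2 h2 h
    rw [Finset.mem_filter, List.mem_toFinset] at h1 h2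
    exact oreInjSnd hp d1 h1.1 d2 h2.1 h
  · intro w hw
    rw [SimpleGraph.mem_neighborFinset] at hw
    have hws : w ∈ p.support := hNa w hw
    have hwa : w ≠ a := fun h => G.irrefl (h ▸ hw)
    rw [p.support_eq_cons, List.mem_cons] at hws
    rcases hws with rfl | hws
    · exact absurd rfl hwa
    · rw [← Walk.map_snd_darts, List.mem_map] at hws
      obtain ⟨d, hd, hds⟩ := hws
      refine ⟨d, Finset.mem_filter.2 ⟨List.mem_toFinset.2 hd, hds ▸ hw⟩, hds⟩

lemma oreCountFst {a b : V} {p : G.Walk a b}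
    (hp : p.IsPath) (hNb : ∀ w, G.Adj b w → w ∈ p.support) :
    ((p.darts.toFinset).filter (fun d => G.Adj d.fst b)).card = G.degree b := by
  rw [SimpleGraph.degree]
  apply Finset.card_bij (fun d _ => d.fst)
  · intro d hd
    rw [Finset.mem_filter] at hd
    rw [SimpleGraph.mem_neighborFinset]
    exact hd.2.symm
  · intro d1 h1 d2 h2 h
    rw [Finset.mem_filter, List.mem_toFinset] at h1 h2
    exact oreInjFst hp d1 h1.1 d2 h2.1 h
  · intro w hw
    rw [SimpleGraph.mem_neighborFinset] at hw
    have hws : w ∈ p.support := hNb w hw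
    have hwb : w ≠ b := fun h => G.irrefl (h ▸ hw)
    have : w ∈ p.support.dropLast := by
      have hnil : p.support ≠ [] := p.support_ne_nil
      rw [← List.dropLast_append_getLast hnil, List.mem_append] at hws
      rcases hws with h | h
      · exact h
      · rw [List.mem_singleton, p.getLast_support] at h
        exact absurd h hwb
    rw [← Walk.map_fst_darts, List.mem_map] at this
    obtain ⟨d, hd, hds⟩ := this
    refine ⟨d, Finset.mem_filter.2 ⟨List.mem_toFinset.2 hd, hds ▸ hw.symm⟩, hds⟩

end cnt

lemma oreCycle {a b u v' : V} {q1 : G.Walk a u} {q2 : G.Walk v' b}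
    (h1 : q1.support.Nodup) (h2 : q2.support.Nodup)
    (hdisj : ∀ x, x ∈ q1.support → x ∈ q2.support → False)
    (hav : G.Adj a v') (hub : G.Adj u b) (hnadj : ¬ G.Adj a b) :
    ∃ c : G.Walk a a, c.IsCycle ∧ (∀ x, x ∈ c.support ↔ (x ∈ q1.support ∨ x ∈ q2.support)) ∧
      c.length = q1.length + q2.length + 2 := by
  have hane : a ≠ u := fun h => hnadj (h ▸ hub)
  have hvb : v' ≠ b := fun h => hnadj (h ▸ hav)
  have hab : a ≠ b := fun h => hdisj a q1.start_mem_support (h ▸ q2.end_mem_support)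
  refine ⟨Walk.cons hav (q2.append (Walk.cons hub.symm q1.reverse)), ⟨⟨⟨?_⟩, by simp⟩, ?_⟩, ?_, ?_⟩
  · -- edges nodup
    simp only [Walk.edges_cons, Walk.edges_append, Walk.edges_reverse]
    rw [List.nodup_cons, List.nodup_append, List.nodup_cons]
    refine ⟨?_, edges_nodup_of_support_nodup h2, ⟨?_, List.nodup_reverse.2 (edges_nodup_of_support_nodup h1)⟩, ?_⟩
    · -- s(a,v') not in rest
      rw [List.mem_append, List.mem_cons]
      rintro (h | h | h)
      · exact hdisj a q1.start_mem_support (q2.fst_mem_support_of_mem_edges h)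
      · rw [Sym2.eq_iff] at h
        rcases h with ⟨h, _⟩ | ⟨h, _⟩
        · exact hab h
        · exact hane h
      · rw [List.mem_reverse] at h
        exact hdisj v' (q1.snd_mem_support_of_mem_edges h) q2.start_mem_support
    · -- s(b,u) not in q1.edges.reverse
      rw [List.mem_reverse]
      intro h
      exact hdisj b (q1.fst_mem_support_of_mem_edges h) q2.end_mem_support
    · -- disjoint q2.edges (s(b,u) :: q1.edges.reverse)
      intro e he e' he' hee
      subst hee
      rw [List.mem_cons] at he'
      rcases he' with rfl | he'
      · exact hdisj u q1.end_mem_support (q2.snd_mem_support_of_mem_edges he)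
      · rw [List.mem_reverse] at he'
        induction e with
        | h x y =>
          exact hdisj x (q1.fst_mem_support_of_mem_edges he') (q2.fst_mem_support_of_mem_edges he)
  · -- support tail nodup
    simp only [Walk.support_cons, List.tail_cons, Walk.support_append, Walk.support_reverse]
    rw [List.nodup_append]
    refine ⟨h2, List.nodup_reverse.2 h1, ?_⟩
    intro x hx y hx' hxy
    subst hxy
    rw [List.mem_reverse] at hx'
    exact hdisj x hx' hx
  · -- support membership
    intro x
    simp only [Walk.support_cons, Walk.support_append, Walk.support_reverse, List.mem_cons,
      List.mem_append, List.tail_cons, List.mem_reverse]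
    constructor
    · rintro (rfl | h | h)
      · exact Or.inl q1.start_mem_support
      · exact Or.inr h
      · exact Or.inl h
    · rintro (h | h)
      · exact Or.inr (Or.inr h)
      · exact Or.inr (Or.inl h)
  · simp only [Walk.length_cons, Walk.length_append, Walk.length_reverse]
    omega

lemma oreLengthRotate [DecidableEq V] {u v : V} (c : G.Walk v v) (h : u ∈ c.support) :
    (c.rotate u h).length = c.length := by
  have := congrArg Walk.length (c.take_spec h)
  rw [Walk.length_append] at this
  unfold Walk.rotate
  rw [Walk.length_append]
  omega

lemma oreCommon [Fintype V] [DecidableEq V] [DecidableRel G.Adj]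
    (hdeg : ∀ x y : V, x ≠ y → ¬ G.Adj x y → Fintype.card V ≤ G.degree x + G.degree y)
    {x y : V} (hxy : x ≠ y) (hnadj : ¬ G.Adj x y) : ∃ z, G.Adj x z ∧ G.Adj y z := by
  by_contra h
  push_neg at h
  have hdisj : Disjoint (G.neighborFinset x) (G.neighborFinset y) := by
    rw [Finset.disjoint_left]
    intro z hz hz'
    rw [mem_neighborFinset] at hz hz'
    exact h z hz hz'
  have hsub : G.neighborFinset x ∪ G.neighborFinset y ⊆ univ \ {x, y} := by
    intro z hz
    rw [Finset.mem_union, mem_neighborFinset, mem_neighborFinset] at hz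
    rw [Finset.mem_sdiff, Finset.mem_insert, Finset.mem_singleton]
    refine ⟨Finset.mem_univ _, ?_⟩
    rintro (rfl | rfl)
    · rcases hz with hz | hz
      · exact G.irrefl hz
      · exact hnadj hz.symm
    · rcases hz with hz | hz
      · exact hnadj hz
      · exact G.irrefl hz
  have hcard := Finset.card_le_card hsub
  rw [Finset.card_union_of_disjoint hdisj, Finset.card_sdiff_of_subset (Finset.subset_univ _)] at hcard
  rw [Finset.card_insert_of_notMem (by simpa using hxy), Finset.card_singleton] at hcard
  have := hdeg x y hxy hnadj
  rw [SimpleGraph.degree, SimpleGraph.degree] at this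
  rw [Finset.card_univ] at hcard
  have hpos : 0 < Fintype.card V := Fintype.card_pos_iff.mpr ⟨x⟩
  omega

lemma oreMaxPath [Fintype V] (hne : Nonempty V) :
    ∃ (a b : V) (p : G.Walk a b), p.IsPath ∧
      ∀ (x y : V) (q : G.Walk x y), q.IsPath → q.length ≤ p.length := by
  obtain ⟨v⟩ := hne
  set S : Set ℕ := {l | ∃ (x y : V) (q : G.Walk x y), q.IsPath ∧ q.length = l} with hS
  have h0 : (0 : ℕ) ∈ S := ⟨v, v, Walk.nil, Walk.IsPath.nil, rfl⟩
  have hbdd : BddAbove S := by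
    refine ⟨Fintype.card V, ?_⟩
    rintro l ⟨x, y, q, hq, rfl⟩
    exact hq.length_lt.le
  obtain ⟨x, y, q, hq, hl⟩ := Nat.sSup_mem ⟨0, h0⟩ hbdd
  exact ⟨x, y, q, hq, fun x' y' q' hq' => hl ▸ le_csSup hbdd ⟨x', y', q', hq', rfl⟩⟩

end OreAux

/-- Ore's theorem: if every pair of nonadjacent vertices of a graph on `n ≥ 3` vertices
has degree sum at least `n`, the graph is Hamiltonian. -/
theorem stmt_2 {V : Type*} [Fintype V] [DecidableEq V] (G : SimpleGraph V) [DecidableRel G.Adj]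
    (hn : 3 ≤ Fintype.card V)
    (hdeg : ∀ x y : V, x ≠ y → ¬ G.Adj x y → Fintype.card V ≤ G.degree x + G.degree y) :
    G.IsHamiltonian := by
  have hne : Nonempty V := Fintype.card_pos_iff.mp (by omega)
  obtain ⟨a, b, p, hp, hmax⟩ := oreMaxPath (G := G) hne
  have hNa : ∀ w, G.Adj a w → w ∈ p.support := by
    intro w hw
    by_contra hws
    have hq : (Walk.cons hw.symm p).IsPath := by
      rw [Walk.cons_isPath_iff]; exact ⟨hp, hws⟩
    have := hmax _ _ _ hq
    simp only [Walk.length_cons] at this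
    omega
  have hNb : ∀ w, G.Adj b w → w ∈ p.support := by
    intro w hw
    by_contra hws
    have hq : (Walk.cons hw.symm p.reverse).IsPath := by
      rw [Walk.cons_isPath_iff]
      exact ⟨hp.reverse, by rwa [Walk.support_reverse, List.mem_reverse]⟩
    have := hmax _ _ _ hq
    simp only [Walk.length_cons, Walk.length_reverse] at this
    omega
  by_cases hab : a = b
  · exfalso
    subst hab
    have hnil := oreLoopNil hp
    obtain ⟨y, hy⟩ := Fintype.exists_ne_of_one_lt_card (by omega) a
    by_cases hadj : G.Adj a y
    · have hq : (Walk.cons hadj.symm (Walk.nil)).IsPath := by simp [hy]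
      have := hmax _ _ _ hq
      rw [hnil] at this
      simp at this
    · have h1 := hdeg a y (Ne.symm hy) hadj
      have hd0 : G.degree a = 0 := by
        rw [SimpleGraph.degree, Finset.card_eq_zero, Finset.eq_empty_iff_forall_notMem]
        intro w hw
        rw [mem_neighborFinset] at hw
        have hws := hNa w hw
        rw [hnil] at hws
        simp only [Walk.support_nil, List.mem_singleton] at hws
        exact G.irrefl (hws ▸ hw)
      have h2 := G.degree_lt_card_verts y
      omega
  have hcyc : ∃ (r : V) (c : G.Walk r r), c.IsCycle ∧
      (∀ x, x ∈ c.support ↔ x ∈ p.support) ∧ c.length = p.length + 1 := by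
    by_cases hadj : G.Adj a b
    · by_cases hlen : 2 ≤ p.length
      · refine ⟨b, Walk.cons hadj.symm p, ?_, ?_, by simp⟩
        · rw [Walk.cons_isCycle_iff]
          exact ⟨hp, oreEdgeNotMem hp hlen⟩
        · intro x
          simp only [Walk.support_cons, List.mem_cons]
          constructor
          · rintro (rfl | h)
            · exact p.end_mem_support
            · exact h
          · exact Or.inr
      · exfalso
        have hl1 : p.length = 1 := by
          rcases Nat.lt_or_ge p.length 1 with h | h
          · exact absurd (Walk.eq_of_length_eq_zero (p := p) (by omega)) hab
          · omega
        have hsupp2 : p.support = [a, b] := by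
          cases p with
          | nil => simp at hl1
          | cons h q =>
            cases q with
            | nil => simp
            | cons h' q' => simp [Walk.length_cons] at hl1
        have hmem : ∀ z, z ∈ p.support ↔ (z = a ∨ z = b) := by
          intro z
          rw [hsupp2]
          simp
        obtain ⟨w, hwab⟩ : ∃ w : V, w ∉ ({a, b} : Finset V) := by
          by_contra hcon
          push_neg at hcon
          have hsub : (Finset.univ : Finset V) ⊆ {a, b} := fun z _ => hcon z
          have hle := Finset.card_le_card hsub
          have h2 : ({a, b} : Finset V).card ≤ 2 :=
            (Finset.card_insert_le _ _).trans (by simp)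
          rw [Finset.card_univ] at hle
          omega
        rw [Finset.mem_insert, Finset.mem_singleton] at hwab
        push_neg at hwab
        obtain ⟨hwa, hwb⟩ := hwab
        have hnadjaw : ¬ G.Adj a w := by
          intro h
          rcases (hmem w).1 (hNa w h) with rfl | rfl
          · exact hwa rfl
          · exact hwb rfl
        have hdega : G.degree a ≤ 1 := by
          have hsub : G.neighborFinset a ⊆ {b} := by
            intro z hz
            rw [mem_neighborFinset] at hz
            rcases (hmem z).1 (hNa z hz) with rfl | rfl
            · exact absurd hz G.irrefl
            · exact Finset.mem_singleton_self _
          have hle := Finset.card_le_card hsub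
          rw [Finset.card_singleton] at hle
          exact hle
        have h1 := hdeg w a hwa (fun h => hnadjaw h.symm)
        have hNwsub : G.neighborFinset w ⊆ Finset.univ.erase w := by
          intro z hz
          rw [mem_neighborFinset] at hz
          rw [Finset.mem_erase]
          exact ⟨fun h => G.irrefl (h ▸ hz), Finset.mem_univ z⟩
        have hcard : (Finset.univ.erase w).card ≤ (G.neighborFinset w).card := by
          rw [Finset.card_erase_of_mem (Finset.mem_univ w), Finset.card_univ]
          have e : G.degree w = (G.neighborFinset w).card := rfl
          omega
        have heq := Finset.eq_of_subset_of_card_le hNwsub hcard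
        have ha : a ∈ G.neighborFinset w := by
          rw [heq, Finset.mem_erase]
          exact ⟨fun h => hwa h.symm, Finset.mem_univ a⟩
        rw [mem_neighborFinset] at ha
        exact hnadjaw ha.symm
    · -- nonadjacent case
      have hDnodup : p.darts.Nodup := by
        have : (p.darts.map (·.snd)).Nodup := by
          rw [Walk.map_snd_darts]
          have h2 := hp.support_nodup
          rw [p.support_eq_cons, List.nodup_cons] at h2
          exact h2.2
        exact this.of_map _
      have hD : p.darts.toFinset.card = p.length := by
        rw [List.toFinset_card_of_nodup hDnodup, Walk.length_darts]
      set A := p.darts.toFinset.filter (fun d => G.Adj a d.snd) with hAdef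
      set B := p.darts.toFinset.filter (fun d => G.Adj d.fst b) with hBdef
      have hA : A.card = G.degree a := oreCountSnd hp hNa
      have hB : B.card = G.degree b := oreCountFst hp hNb
      have hn' := hdeg a b hab hadj
      have hk : p.length < Fintype.card V := hp.length_lt
      have hunion : (A ∪ B).card ≤ p.length :=
        hD ▸ Finset.card_le_card (Finset.union_subset (Finset.filter_subset _ _)
          (Finset.filter_subset _ _))
      have hint : (A ∩ B).Nonempty := by
        rw [← Finset.card_pos]
        have := Finset.card_union_add_card_inter A B
        omega
      obtain ⟨d, hd⟩ := hint
      rw [Finset.mem_inter, hAdef, hBdef, Finset.mem_filter, Finset.mem_filter,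
        List.mem_toFinset] at hd
      obtain ⟨⟨hd1, hav⟩, _, hub⟩ := hd
      obtain ⟨q1, q2, hpe⟩ := oreDecomp hd1
      have hsupp : p.support = q1.support ++ q2.support := by
        rw [hpe, Walk.support_append, Walk.support_cons, List.tail_cons]
      have hnd := hp.support_nodup
      rw [hsupp, List.nodup_append] at hnd
      obtain ⟨h1, h2, hdisj⟩ := hnd
      obtain ⟨c, hc, hcsupp, hclen⟩ :=
        oreCycle h1 h2 (fun x hx hx' => hdisj x hx x hx' rfl) hav hub hadj
      refine ⟨a, c, hc, ?_, ?_⟩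
      · intro x
        rw [hcsupp x, hsupp, List.mem_append]
      · have := congrArg Walk.length hpe
        rw [Walk.length_append, Walk.length_cons] at this
        omega
  obtain ⟨r, c, hc, hcsupp, hclen⟩ := hcyc
  have hall : ∀ w : V, w ∈ p.support := by
    by_contra hws
    push_neg at hws
    obtain ⟨w, hw⟩ := hws
    have hbnd : ∃ x y, x ∉ p.support ∧ y ∈ p.support ∧ G.Adj y x := by
      have hwa : w ≠ a := fun h => hw (h ▸ p.start_mem_support)
      by_cases hadj : G.Adj w a
      · exact ⟨w, a, hw, p.start_mem_support, hadj.symm⟩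
      · obtain ⟨z, hz1, hz2⟩ := oreCommon hdeg hwa hadj
        by_cases hzs : z ∈ p.support
        · exact ⟨w, z, hw, hzs, hz1.symm⟩
        · exact ⟨z, a, hzs, p.start_mem_support, hz2⟩
    obtain ⟨x, y, hx, hy, hyx⟩ := hbnd
    have hyc : y ∈ c.support := (hcsupp y).2 hy
    have hc' : (c.rotate y hyc).IsCycle := hc.rotate hyc
    have hnnil : ¬ (c.rotate y hyc).Nil := hc'.not_nil
    have ht : (c.rotate y hyc).tail.IsPath := by
      apply Walk.IsPath.mk'
      rw [Walk.support_tail_of_not_nil _ hnnil]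
      exact hc'.support_nodup
    have hxs : x ∉ (c.rotate y hyc).tail.support := by
      rw [Walk.support_tail_of_not_nil _ hnnil]
      intro hmem
      have hmem2 : x ∈ c.support.tail := (Walk.support_rotate c y hyc).mem_iff.1 hmem
      exact hx ((hcsupp x).1 (List.mem_of_mem_tail hmem2))
    have hnew : ((c.rotate y hyc).tail.concat hyx).IsPath := by
      apply Walk.IsPath.mk'
      rw [Walk.support_concat]
      simp only [List.concat_eq_append, List.nodup_append, List.nodup_singleton]
      refine ⟨ht.support_nodup, trivial, ?_⟩
      intro z hz z' hz' hzz
      subst hzz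
      rw [List.mem_singleton] at hz'
      exact hxs (hz' ▸ hz)
    have hlen2 := hmax _ _ _ hnew
    rw [Walk.length_concat] at hlen2
    have e2 : (c.rotate y hyc).tail.length + 1 = (c.rotate y hyc).length :=
      Walk.length_tail_add_one hnnil
    have e3 := oreLengthRotate c hyc
    omega
  intro _
  refine ⟨r, c, hc, ?_⟩
  apply Walk.IsPath.isHamiltonian_of_mem
  · apply Walk.IsPath.mk'
    rw [Walk.support_tail_of_not_nil _ hc.not_nil]
    exact hc.support_nodup
  · intro w
    have hw : w ∈ c.support := (hcsupp w).2 (hall w)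
    rw [c.support_eq_cons, List.mem_cons] at hw
    rcases hw with rfl | hw
    · exact c.tail.end_mem_support
    · rw [Walk.support_tail_of_not_nil _ hc.not_nil]
      exact hw
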